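/- For each integer n with |n| ≥ 2, the function j(τ,ξ) = jₙ·exp(i(nξ + n√(n²−1)·τ)) + j₋ₙ·exp(i(−nξ − n√(n²−1)·τ)), with complex constants satisfying conj(j₋ₙ) = 2(n√(n²−1) − n² + 1/2)·jₙ, solves the complex linearized equation ∂_τ j = −i ∂²_ξ j − (i/2)(j − conj(j)). -/

import Mathlib

open Real Complex

private lemma hasDerivAt_lin_exp (A B c d : ℂ) (t : ℝ) :
    HasDerivAt (fun t : ℝ => A * Complex.exp (c * t + d) + B * Complex.exp (-(c * t + d)))
      (c * A * Complex.exp (c * t + d) - c * B * Complex.exp (-(c * t + d))) t := by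
  have h1 : HasDerivAt (fun t : ℝ => ((t : ℂ))) 1 t := Complex.ofRealCLM.hasDerivAt
  have h2 : HasDerivAt (fun t : ℝ => c * (t : ℂ) + d) c t := by
    simpa using (h1.const_mul c).add_const d
  have h3 : HasDerivAt (fun t : ℝ => -(c * (t : ℂ) + d)) (-c) t := h2.neg
  have e1 := (h2.cexp.const_mul A)
  have e2 := (h3.cexp.const_mul B)
  have := e1.add e2
  refine this.congr_deriv ?_
  ring

private lemma deriv_lin_exp (A B c d : ℂ) (t : ℝ) :
    deriv (fun t : ℝ => A * Complex.exp (c * t + d) + B * Complex.exp (-(c * t + d))) t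
    = c * A * Complex.exp (c * t + d) - c * B * Complex.exp (-(c * t + d)) :=
  (hasDerivAt_lin_exp A B c d t).deriv

/-- for each integer `n` with `|n| ≥ 2`, the function
`j(τ,ξ) = jₙ e^{i(nξ + n√(n²−1)τ)} + j₋ₙ e^{−i(nξ + n√(n²−1)τ)}`, with constants
satisfying `conj(j₋ₙ) = 2(n√(n²−1) − n² + 1/2) jₙ`, solves the complex linearized
equation `∂_τ j = −i ∂²_ξ j − (i/2)(j − conj j)`. -/
theorem stmt_4 (n : ℤ) (hn : 2 ≤ |n|) (jn jm : ℂ)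
    (hrel : (starRingEnd ℂ) jm
      = 2 * ((n : ℂ) * (Real.sqrt ((n : ℝ)^2 - 1) : ℝ) - (n : ℂ)^2 + 1/2) * jn)
    (j : ℝ → ℝ → ℂ)
    (hj : ∀ τ ξ : ℝ, j τ ξ
      = jn * Complex.exp (Complex.I *
          ((n : ℂ) * (ξ : ℂ) + (n : ℂ) * (Real.sqrt ((n : ℝ)^2 - 1) : ℝ) * (τ : ℂ)))
      + jm * Complex.exp (-(Complex.I *
          ((n : ℂ) * (ξ : ℂ) + (n : ℂ) * (Real.sqrt ((n : ℝ)^2 - 1) : ℝ) * (τ : ℂ))))) :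
    ∀ τ ξ : ℝ, deriv (fun τ => j τ ξ) τ
      = -Complex.I * deriv (deriv (fun ξ => j τ ξ)) ξ
        - Complex.I / 2 * (j τ ξ - (starRingEnd ℂ) (j τ ξ)) := by
  intro τ ξ
  set s : ℝ := Real.sqrt ((n : ℝ)^2 - 1) with hs_def
  -- nonnegativity and square
  have hge : (0:ℝ) ≤ (n:ℝ)^2 - 1 := by
    have h2 : (2:ℝ) ≤ |(n:ℝ)| := by exact_mod_cast (by simpa using hn : (2:ℤ) ≤ |n|)
    nlinarith [_root_.sq_abs ((n:ℝ)), abs_nonneg ((n:ℝ))]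
  have hs2R : s ^ 2 = (n:ℝ)^2 - 1 := Real.sq_sqrt hge
  have hs2 : ((s : ℂ))^2 = (n:ℂ)^2 - 1 := by
    exact_mod_cast hs2R
  have hrel' : jm = 2 * ((n : ℂ) * (s:ℂ) - (n : ℂ)^2 + 1/2) * (starRingEnd ℂ) jn := by
    have := congrArg (starRingEnd ℂ) hrel
    simpa [map_mul, map_add, map_sub, map_div₀, map_ofNat, map_one, map_pow,
      Complex.conj_ofReal, Complex.conj_conj] using this
  -- τ derivative
  have hτ : deriv (fun τ => j τ ξ) τ
      = (Complex.I * ((n:ℂ) * s)) * jn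
          * Complex.exp (Complex.I * ((n:ℂ)*(ξ:ℂ) + (n:ℂ)*(s:ℂ)*(τ:ℂ)))
        - (Complex.I * ((n:ℂ) * s)) * jm
          * Complex.exp (-(Complex.I * ((n:ℂ)*(ξ:ℂ) + (n:ℂ)*(s:ℂ)*(τ:ℂ)))) := by
    have hfun : (fun τ : ℝ => j τ ξ)
        = fun τ : ℝ => jn * Complex.exp ((Complex.I * ((n:ℂ)*s)) * (τ:ℂ)
              + Complex.I * ((n:ℂ)*(ξ:ℂ)))
          + jm * Complex.exp (-((Complex.I * ((n:ℂ)*s)) * (τ:ℂ)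
              + Complex.I * ((n:ℂ)*(ξ:ℂ)))) := by
      funext t
      rw [hj]
      ring_nf
    rw [hfun, deriv_lin_exp]
    rw [show (Complex.I * ((n:ℂ)*s)) * (τ:ℂ) + Complex.I * ((n:ℂ)*(ξ:ℂ))
        = Complex.I * ((n:ℂ)*(ξ:ℂ) + (n:ℂ)*(s:ℂ)*(τ:ℂ)) by ring]
  -- first ξ derivative as a function
  have hξ1 : deriv (fun ξ => j τ ξ)
      = fun ξ : ℝ => (Complex.I * (n:ℂ)) * jn
          * Complex.exp ((Complex.I * (n:ℂ)) * (ξ:ℂ) + Complex.I * ((n:ℂ)*(s:ℂ)*(τ:ℂ)))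
        + (-((Complex.I * (n:ℂ)) * jm))
          * Complex.exp (-((Complex.I * (n:ℂ)) * (ξ:ℂ) + Complex.I * ((n:ℂ)*(s:ℂ)*(τ:ℂ)))) := by
    funext x
    have hfun : (fun ξ : ℝ => j τ ξ)
        = fun ξ : ℝ => jn * Complex.exp ((Complex.I * (n:ℂ)) * (ξ:ℂ)
              + Complex.I * ((n:ℂ)*(s:ℂ)*(τ:ℂ)))
          + jm * Complex.exp (-((Complex.I * (n:ℂ)) * (ξ:ℂ)
              + Complex.I * ((n:ℂ)*(s:ℂ)*(τ:ℂ)))) := by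
      funext y
      rw [hj]
      ring_nf
    rw [hfun, deriv_lin_exp]
    ring
  -- second ξ derivative
  have hξ2 : deriv (deriv (fun ξ => j τ ξ)) ξ
      = -((n:ℂ)^2) * (jn * Complex.exp (Complex.I * ((n:ℂ)*(ξ:ℂ) + (n:ℂ)*(s:ℂ)*(τ:ℂ)))
          + jm * Complex.exp (-(Complex.I * ((n:ℂ)*(ξ:ℂ) + (n:ℂ)*(s:ℂ)*(τ:ℂ))))) := by
    rw [hξ1, deriv_lin_exp]
    rw [show (Complex.I * (n:ℂ)) * (ξ:ℂ) + Complex.I * ((n:ℂ)*(s:ℂ)*(τ:ℂ))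
        = Complex.I * ((n:ℂ)*(ξ:ℂ) + (n:ℂ)*(s:ℂ)*(τ:ℂ)) by ring]
    have hI : Complex.I ^ 2 = -1 := Complex.I_sq
    linear_combination (((n:ℂ))^2 * (jn * Complex.exp (Complex.I * ((n:ℂ)*(ξ:ℂ) + (n:ℂ)*(s:ℂ)*(τ:ℂ)))
          + jm * Complex.exp (-(Complex.I * ((n:ℂ)*(ξ:ℂ) + (n:ℂ)*(s:ℂ)*(τ:ℂ)))))) * hI
  -- conjugate of j
  have hconj : (starRingEnd ℂ) (j τ ξ)
      = (starRingEnd ℂ) jn * Complex.exp (-(Complex.I * ((n:ℂ)*(ξ:ℂ) + (n:ℂ)*(s:ℂ)*(τ:ℂ))))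
        + (starRingEnd ℂ) jm * Complex.exp (Complex.I * ((n:ℂ)*(ξ:ℂ) + (n:ℂ)*(s:ℂ)*(τ:ℂ))) := by
    rw [hj]
    simp only [map_add, map_mul, map_neg, ← Complex.exp_conj, Complex.conj_I,
      Complex.conj_ofReal, map_intCast]
    ring_nf
  rw [hτ, hξ2, hconj, hrel, hrel', hj]
  set E := Complex.exp (Complex.I * ((n:ℂ)*(ξ:ℂ) + (n:ℂ)*(s:ℂ)*(τ:ℂ)))
  set F := Complex.exp (-(Complex.I * ((n:ℂ)*(ξ:ℂ) + (n:ℂ)*(s:ℂ)*(τ:ℂ))))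
  linear_combination (-2 * Complex.I * (n:ℂ)^2 * (starRingEnd ℂ) jn * F) * hs2 + (Complex.I/2 * F) * hrel'
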